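/- Let N ≥ 1, let A be a nonempty bounded subset of ℝ^N and let δ > 0. Then the distance zeta function ζ_A(s) = ∫_{A_δ} d(x,A)^{s−N} dx is well defined (the integral converges absolutely) and is holomorphic as a function of s on the open half-plane {s ∈ ℂ : Re s > dim̄_B A}. -/

import Mathlib

open MeasureTheory Metric Filter Set
open scoped ENNReal Topology

/-- The upper `r`-dimensional Minkowski content of a subset of `ℝ^N`. -/
noncomputable def upperMink (N : ℕ) (A : Set (EuclideanSpace ℝ (Fin N))) (r : ℝ) : ℝ≥0∞ :=
  Filter.limsup (fun t : ℝ => volume (thickening t A) / ENNReal.ofReal (t ^ ((N : ℝ) - r)))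
    (𝓝[>] (0 : ℝ))

/-- The upper box (Minkowski) dimension of a subset of `ℝ^N`. -/
noncomputable def upperBoxDim (N : ℕ) (A : Set (EuclideanSpace ℝ (Fin N))) : ℝ :=
  sInf {r : ℝ | 0 < r ∧ upperMink N A r = 0}

namespace ZetaAux

lemma auxTendstoZero {c : ℝ} (hc : 0 < c) :
    Tendsto (fun t : ℝ => t ^ c) (𝓝[>] (0:ℝ)) (𝓝 0) := by
  have h := (Real.continuousAt_rpow_const 0 c (Or.inr hc.le)).tendsto
  rw [Real.zero_rpow hc.ne'] at h
  exact h.mono_left nhdsWithin_le_nhds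

lemma auxTendstoTop {c : ℝ} (hc : c < 0) :
    Tendsto (fun t : ℝ => t ^ c) (𝓝[>] (0:ℝ)) atTop := by
  have h1 : Tendsto (fun t : ℝ => t ^ (-c)) (𝓝[>] (0:ℝ)) (𝓝[>] 0) := by
    refine tendsto_nhdsWithin_iff.mpr ⟨auxTendstoZero (neg_pos.mpr hc), ?_⟩
    filter_upwards [self_mem_nhdsWithin] with t ht
    exact Real.rpow_pos_of_pos ht _
  refine h1.inv_tendsto_nhdsGT_zero.congr' ?_
  filter_upwards [self_mem_nhdsWithin] with t ht
  simp only [Pi.inv_apply]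
  rw [Real.rpow_neg ht.le, inv_inv]

variable {N : ℕ} {A : Set (EuclideanSpace ℝ (Fin N))}

lemma measure_thickening_lt_top (hb : Bornology.IsBounded A) (t : ℝ) :
    volume (thickening t A) < ⊤ :=
  hb.thickening.measure_lt_top

lemma mink_zero_of_lt (hb : Bornology.IsBounded A) {r : ℝ} (hr : (N:ℝ) < r) :
    upperMink N A r = 0 := by
  unfold upperMink
  apply Filter.Tendsto.limsup_eq
  set M := volume (thickening 1 A) with hM
  have hMtop : M ≠ ⊤ := (measure_thickening_lt_top hb 1).ne
  have h1 : Tendsto (fun t : ℝ => ENNReal.ofReal (t ^ ((N:ℝ) - r))) (𝓝[>] (0:ℝ)) (𝓝 ⊤) :=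
    ENNReal.tendsto_ofReal_atTop.comp (auxTendstoTop (by linarith))
  have h3 : Tendsto (fun t : ℝ => M * (ENNReal.ofReal (t ^ ((N:ℝ) - r)))⁻¹)
      (𝓝[>] (0:ℝ)) (𝓝 0) := by
    have hinv : Tendsto (fun t : ℝ => (ENNReal.ofReal (t ^ ((N:ℝ) - r)))⁻¹)
        (𝓝[>] (0:ℝ)) (𝓝 (⊤ : ℝ≥0∞)⁻¹) := ENNReal.tendsto_inv_iff.mpr h1
    have := ENNReal.Tendsto.const_mul hinv (Or.inr hMtop)
    simpa using this
  apply tendsto_of_tendsto_of_tendsto_of_le_of_le' tendsto_const_nhds h3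
  · exact Eventually.of_forall fun t => zero_le
  · filter_upwards [Ioo_mem_nhdsGT_of_mem (show (0:ℝ) ∈ Ico (0:ℝ) 1 by constructor <;> norm_num)]
      with t ht
    rw [div_eq_mul_inv]
    exact mul_le_mul_left (measure_mono (thickening_mono ht.2.le A)) _

lemma S_nonempty (hb : Bornology.IsBounded A) :
    {r : ℝ | 0 < r ∧ upperMink N A r = 0}.Nonempty :=
  ⟨(N:ℝ) + 1, by positivity, mink_zero_of_lt hb (by linarith)⟩

lemma exists_good (hb : Bornology.IsBounded A) {σ : ℝ} (hσ : upperBoxDim N A < σ) :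
    ∃ r : ℝ, (0 < r ∧ upperMink N A r = 0) ∧ r < σ := by
  rw [upperBoxDim] at hσ
  exact exists_lt_of_csInf_lt (S_nonempty hb) hσ

lemma content_bound {r : ℝ} (h : upperMink N A r = 0) :
    ∃ t₀ > (0:ℝ), ∀ t : ℝ, 0 < t → t < t₀ →
      volume (thickening t A) ≤ ENNReal.ofReal (t ^ ((N:ℝ) - r)) := by
  have h1 : ∀ᶠ t in 𝓝[>] (0:ℝ),
      volume (thickening t A) / ENNReal.ofReal (t ^ ((N:ℝ) - r)) < 1 := by
    refine Filter.eventually_lt_of_limsup_lt ?_ (by isBoundedDefault)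
    rw [upperMink] at h
    rw [h]
    exact zero_lt_one
  rw [eventually_iff, mem_nhdsGT_iff_exists_Ioo_subset] at h1
  obtain ⟨u, hu, hsub⟩ := h1
  refine ⟨u, hu, fun t ht htu => ?_⟩
  have h2 := hsub ⟨ht, htu⟩
  have hD0 : ENNReal.ofReal (t ^ ((N:ℝ) - r)) ≠ 0 :=
    (ENNReal.ofReal_pos.mpr (Real.rpow_pos_of_pos ht _)).ne'
  rw [mem_setOf_eq, ENNReal.div_lt_iff (Or.inl hD0) (Or.inl ENNReal.ofReal_ne_top),
    one_mul] at h2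
  exact h2.le

lemma dim_le (hb : Bornology.IsBounded A) : upperBoxDim N A ≤ N := by
  rw [upperBoxDim]
  refine le_of_forall_pos_le_add fun ε hε => ?_
  refine csInf_le ⟨0, fun r hr => hr.1.le⟩ ⟨by positivity, mink_zero_of_lt hb (by linarith)⟩

lemma norm_cpow_le {x : ℝ} (hx : 0 ≤ x) (w : ℂ) : ‖(x:ℂ) ^ w‖ ≤ x ^ w.re := by
  rcases hx.lt_or_eq with h | h
  · rw [Complex.norm_cpow_eq_rpow_re_of_pos h]
  · by_cases hw : w = 0
    · simp [hw]
    · rw [← h, Complex.ofReal_zero, Complex.zero_cpow hw, norm_zero]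
      exact Real.rpow_nonneg le_rfl _

lemma rpow_le_add {x lo c hi : ℝ} (hx : 0 < x) (h1 : lo ≤ c) (h2 : c ≤ hi) :
    x ^ c ≤ x ^ lo + x ^ hi := by
  rcases le_total x 1 with h | h
  · have e1 := Real.rpow_le_rpow_of_exponent_ge hx h h1
    have e2 := Real.rpow_nonneg hx.le hi
    linarith
  · have e1 := Real.rpow_le_rpow_of_exponent_le h h2
    have e2 := Real.rpow_nonneg hx.le lo
    linarith

lemma abs_log_le {x e : ℝ} (hx : 0 ≤ x) (he : 0 < e) :
    |Real.log x| ≤ (x ^ (-e) + x ^ e) / e := by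
  rcases hx.lt_or_eq with h | h
  · have hinv : -Real.log x ≤ x ^ (-e) / e := by
      have h1 : Real.log x⁻¹ ≤ (x⁻¹) ^ e / e := Real.log_le_rpow_div (inv_nonneg.mpr hx) he
      rw [Real.log_inv, Real.inv_rpow hx, ← Real.rpow_neg hx] at h1
      exact h1
    have hup : Real.log x ≤ x ^ e / e := Real.log_le_rpow_div hx he
    have hn1 : 0 ≤ x ^ (-e) / e := div_nonneg (Real.rpow_nonneg hx _) he.le
    have hn2 : 0 ≤ x ^ e / e := div_nonneg (Real.rpow_nonneg hx _) he.le
    rw [abs_le, add_div]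
    constructor <;> linarith
  · rw [← h]
    rw [Real.log_zero, Real.zero_rpow (neg_ne_zero.mpr he.ne'), Real.zero_rpow he.ne']
    simp

lemma measurable_rpow_const (p : ℝ) : Measurable fun x : ℝ => x ^ p :=
  measurable_of_continuousOn_compl_singleton 0 fun x hx =>
    (Real.continuousAt_rpow_const x p (Or.inl hx)).continuousWithinAt

lemma measurable_cpow_const {α : Type*} [MeasurableSpace α] {f : α → ℝ}
    (hf : Measurable f) (w : ℂ) : Measurable fun x => ((f x : ℂ)) ^ w := by
  simp only [Complex.cpow_def]
  apply Measurable.ite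
  · exact (Complex.measurable_ofReal.comp hf) (measurableSet_singleton 0)
  · exact measurable_const
  · exact Complex.measurable_exp.comp
      ((Complex.measurable_log.comp (Complex.measurable_ofReal.comp hf)).mul_const w)

lemma lintegral_lt_top (hA : A.Nonempty) (hb : Bornology.IsBounded A) {δ : ℝ} (hδ : 0 < δ)
    {p : ℝ} (hp : upperBoxDim N A - N < p) :
    ∫⁻ x in thickening δ A, ENNReal.ofReal (infDist x A ^ p) < ⊤ := by
  have hTδ : volume (thickening δ A) < ⊤ := measure_thickening_lt_top hb δ
  have hTm : MeasurableSet (thickening δ A) := isOpen_thickening.measurableSet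
  rcases le_or_gt 0 p with hp0 | hp0
  · calc ∫⁻ x in thickening δ A, ENNReal.ofReal (infDist x A ^ p)
        ≤ ∫⁻ _x in thickening δ A, ENNReal.ofReal (δ ^ p) := by
          refine setLIntegral_mono' hTm fun x hx => ?_
          refine ENNReal.ofReal_le_ofReal
            (Real.rpow_le_rpow infDist_nonneg ?_ hp0)
          exact ((mem_thickening_iff_infDist_lt hA).mp hx).le
      _ = ENNReal.ofReal (δ ^ p) * volume (thickening δ A) := setLIntegral_const _ _
      _ < ⊤ := ENNReal.mul_lt_top ENNReal.ofReal_lt_top hTδ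
  · obtain ⟨r, ⟨hr0, hrM⟩, hrp⟩ := exists_good hb (show upperBoxDim N A < p + N by linarith)
    obtain ⟨t₀, ht₀, hbound⟩ := content_bound hrM
    set c : ℝ := t₀ / 2 with hc
    have hc0 : 0 < c := by positivity
    have hct : c < t₀ := by rw [hc]; linarith
    set u : ℕ → ℝ := fun k => c * (1/2 : ℝ) ^ k with hu
    have hu0 : ∀ k, 0 < u k := fun k => by rw [hu]; positivity
    have huc : ∀ k, u k ≤ c := by
      intro k
      rw [hu]
      calc c * (1/2 : ℝ) ^ k ≤ c * 1 :=
        mul_le_mul_of_nonneg_left (pow_le_one₀ (by norm_num) (by norm_num)) hc0.le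
      _ = c := mul_one c
    have husucc : ∀ k, u (k+1) = u k * (1/2) := fun k => by rw [hu]; ring
    set d : EuclideanSpace ℝ (Fin N) → ℝ := fun x => infDist x A with hd
    set Z : Set (EuclideanSpace ℝ (Fin N)) := d ⁻¹' {0} with hZ
    set R : Set (EuclideanSpace ℝ (Fin N)) := d ⁻¹' Ici c ∩ thickening δ A with hR
    set E : ℕ → Set (EuclideanSpace ℝ (Fin N)) :=
      fun k => d ⁻¹' Ici (u (k+1)) ∩ d ⁻¹' Iio (u k) with hE
    have hcover : thickening δ A ⊆ Z ∪ (R ∪ ⋃ k, E k) := by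
      intro x hx
      rcases (infDist_nonneg : 0 ≤ d x).eq_or_lt with h0 | h0
      · exact Or.inl h0.symm
      rcases le_or_gt c (d x) with h1 | h1
      · exact Or.inr (Or.inl ⟨h1, hx⟩)
      · right; right
        have hex : ∃ n, u (n+1) ≤ d x := by
          obtain ⟨n, hn⟩ := exists_pow_lt_of_lt_one (div_pos h0 hc0) (by norm_num : (1/2:ℝ) < 1)
          refine ⟨n, ?_⟩
          have hun : u n < d x := by
            rw [hu]
            calc c * (1/2:ℝ) ^ n < c * (d x / c) :=
              mul_lt_mul_of_pos_left hn hc0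
            _ = d x := by field_simp
          calc u (n+1) = u n * (1/2) := husucc n
          _ ≤ u n * 1 := mul_le_mul_of_nonneg_left (by norm_num) (hu0 n).le
          _ = u n := mul_one _
          _ ≤ d x := hun.le
        have hk1 : u (Nat.find hex + 1) ≤ d x := Nat.find_spec hex
        have hk2 : d x < u (Nat.find hex) := by
          rcases Nat.eq_zero_or_pos (Nat.find hex) with hk0 | hkpos
          · rw [hk0]
            have : u 0 = c := by rw [hu]; simp
            rw [this]; exact h1
          · obtain ⟨m, hm⟩ := Nat.exists_eq_succ_of_ne_zero hkpos.ne'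
            have hmin := Nat.find_min hex (m := m) (by omega)
            rw [hm]
            exact lt_of_not_ge hmin
        exact mem_iUnion.mpr ⟨Nat.find hex, hk1, hk2⟩
    have hdm : Measurable d := (continuous_infDist_pt A).measurable
    have hZm : MeasurableSet Z := hdm (measurableSet_singleton 0)
    have hRm : MeasurableSet R := (hdm measurableSet_Ici).inter hTm
    have hEm : ∀ k, MeasurableSet (E k) :=
      fun k => (hdm measurableSet_Ici).inter (hdm measurableSet_Iio)
    set f : EuclideanSpace ℝ (Fin N) → ℝ≥0∞ := fun x => ENNReal.ofReal (d x ^ p) with hf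
    have hZint : ∫⁻ x in Z, f x = 0 := by
      have hz : ∀ᵐ x ∂(volume.restrict Z), f x = 0 := by
        refine (ae_restrict_iff' hZm).mpr (Eventually.of_forall fun x hx => ?_)
        have : d x = 0 := hx
        rw [hf]
        simp only [this]
        rw [Real.zero_rpow hp0.ne, ENNReal.ofReal_zero]
      rw [lintegral_congr_ae hz, lintegral_zero]
    have hRint : ∫⁻ x in R, f x ≤ ENNReal.ofReal (c ^ p) * volume (thickening δ A) := by
      calc ∫⁻ x in R, f x ≤ ∫⁻ _x in R, ENNReal.ofReal (c ^ p) := by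
            refine setLIntegral_mono' hRm fun x hx => ?_
            exact ENNReal.ofReal_le_ofReal
              (Real.rpow_le_rpow_of_nonpos hc0 hx.1 hp0.le)
        _ = ENNReal.ofReal (c ^ p) * volume R := setLIntegral_const _ _
        _ ≤ ENNReal.ofReal (c ^ p) * volume (thickening δ A) :=
            mul_le_mul_right (measure_mono inter_subset_right) _
    have hEint : ∀ k, ∫⁻ x in E k, f x ≤
        ENNReal.ofReal (u (k+1) ^ p * u k ^ ((N:ℝ) - r)) := by
      intro k
      calc ∫⁻ x in E k, f x ≤ ∫⁻ _x in E k, ENNReal.ofReal (u (k+1) ^ p) := by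
            refine setLIntegral_mono' (hEm k) fun x hx => ?_
            exact ENNReal.ofReal_le_ofReal
              (Real.rpow_le_rpow_of_nonpos (hu0 (k+1)) hx.1 hp0.le)
        _ = ENNReal.ofReal (u (k+1) ^ p) * volume (E k) := setLIntegral_const _ _
        _ ≤ ENNReal.ofReal (u (k+1) ^ p) * ENNReal.ofReal (u k ^ ((N:ℝ) - r)) := by
            refine mul_le_mul_right ?_ _
            refine le_trans (measure_mono ?_) (hbound (u k) (hu0 k)
              (lt_of_le_of_lt (huc k) hct))
            intro x hx
            exact (mem_thickening_iff_infDist_lt hA).mpr hx.2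
        _ = ENNReal.ofReal (u (k+1) ^ p * u k ^ ((N:ℝ) - r)) :=
            (ENNReal.ofReal_mul (Real.rpow_nonneg (hu0 _).le _)).symm
    set q : ℝ := p + ((N:ℝ) - r) with hq
    have hq0 : 0 < q := by rw [hq]; linarith
    have h2pos : (0:ℝ) ≤ 1/2 := by norm_num
    set ρ : ℝ := (1/2:ℝ) ^ q with hρ
    set K : ℝ := (1/2:ℝ) ^ p * c ^ q with hK
    have hterm : ∀ k, u (k+1) ^ p * u k ^ ((N:ℝ) - r) = K * ρ ^ k := by
      intro k
      have e0 : u (k+1) ^ p * u k ^ ((N:ℝ) - r) = (1/2:ℝ) ^ p * u k ^ q := by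
        rw [husucc k, Real.mul_rpow (hu0 k).le h2pos, hq, Real.rpow_add (hu0 k)]
        ring
      have e1 : u k ^ q = c ^ q * ρ ^ k := by
        rw [hu]
        rw [Real.mul_rpow hc0.le (pow_nonneg h2pos k)]
        congr 1
        rw [← Real.rpow_natCast (1/2:ℝ) k, ← Real.rpow_mul h2pos,
          mul_comm (k:ℝ) q, Real.rpow_mul h2pos, Real.rpow_natCast]
      rw [e0, e1, hK]
      ring
    have hρ0 : 0 ≤ ρ := Real.rpow_nonneg h2pos _
    have hρ1 : ρ < 1 := Real.rpow_lt_one h2pos (by norm_num) hq0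
    have hK0 : 0 ≤ K :=
      mul_nonneg (Real.rpow_nonneg h2pos _) (Real.rpow_nonneg hc0.le _)
    have hsum : ∑' k : ℕ, ENNReal.ofReal (K * ρ ^ k) < ⊤ := by
      have heq : ∀ k : ℕ, ENNReal.ofReal (K * ρ ^ k)
          = ENNReal.ofReal K * (ENNReal.ofReal ρ) ^ k := by
        intro k
        rw [ENNReal.ofReal_mul hK0, ENNReal.ofReal_pow hρ0]
      rw [tsum_congr heq, ENNReal.tsum_mul_left, ENNReal.tsum_geometric]
      refine ENNReal.mul_lt_top ENNReal.ofReal_lt_top ?_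
      exact lt_top_iff_ne_top.mpr (ENNReal.inv_ne_top.mpr
        (tsub_pos_iff_lt.mpr (ENNReal.ofReal_lt_one.mpr hρ1)).ne')
    calc ∫⁻ x in thickening δ A, f x
        ≤ ∫⁻ x in Z ∪ (R ∪ ⋃ k, E k), f x := lintegral_mono_set hcover
      _ ≤ (∫⁻ x in Z, f x) + ∫⁻ x in R ∪ ⋃ k, E k, f x := lintegral_union_le _ _ _
      _ ≤ (∫⁻ x in Z, f x) + ((∫⁻ x in R, f x) + ∫⁻ x in ⋃ k, E k, f x) :=
          add_le_add_right (lintegral_union_le _ _ _) _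
      _ ≤ (∫⁻ x in Z, f x) + ((∫⁻ x in R, f x) + ∑' k, ∫⁻ x in E k, f x) :=
          add_le_add_right (add_le_add_right (lintegral_iUnion_le _ _) _) _
      _ < ⊤ := by
          rw [hZint, zero_add]
          refine ENNReal.add_lt_top.mpr ⟨lt_of_le_of_lt hRint ?_, ?_⟩
          · exact ENNReal.mul_lt_top ENNReal.ofReal_lt_top hTδ
          · refine lt_of_le_of_lt (ENNReal.tsum_le_tsum fun k => ?_) hsum
            exact (hEint k).trans (le_of_eq (congrArg ENNReal.ofReal (hterm k)))

lemma integrableOn_rpow (hA : A.Nonempty) (hb : Bornology.IsBounded A) {δ : ℝ} (hδ : 0 < δ)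
    {p : ℝ} (hp : upperBoxDim N A - N < p) :
    IntegrableOn (fun x => infDist x A ^ p) (thickening δ A) volume := by
  have hdm : Measurable fun x : EuclideanSpace ℝ (Fin N) => infDist x A :=
    (continuous_infDist_pt A).measurable
  have hm : Measurable fun x : EuclideanSpace ℝ (Fin N) => infDist x A ^ p :=
    (measurable_rpow_const p).comp hdm
  refine ⟨hm.aestronglyMeasurable, ?_⟩
  rw [hasFiniteIntegral_iff_norm]
  have : ∀ x : EuclideanSpace ℝ (Fin N),
      ENNReal.ofReal ‖infDist x A ^ p‖ = ENNReal.ofReal (infDist x A ^ p) := by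
    intro x
    rw [Real.norm_eq_abs, abs_of_nonneg (Real.rpow_nonneg infDist_nonneg _)]
  simpa only [this] using lintegral_lt_top hA hb hδ hp

lemma integrableOn_cpow (hA : A.Nonempty) (hb : Bornology.IsBounded A) {δ : ℝ} (hδ : 0 < δ)
    {s : ℂ} (hs : upperBoxDim N A < s.re) :
    IntegrableOn (fun x => (infDist x A : ℂ) ^ (s - (N : ℂ)))
      (thickening δ A) volume := by
  have hdm : Measurable fun x : EuclideanSpace ℝ (Fin N) => infDist x A :=
    (continuous_infDist_pt A).measurable
  have hre : (s - (N:ℂ)).re = s.re - N := by simp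
  refine Integrable.mono' (integrableOn_rpow hA hb hδ (p := s.re - N) (by linarith))
    (measurable_cpow_const hdm (s - (N:ℂ))).aestronglyMeasurable ?_
  refine Eventually.of_forall fun x => ?_
  calc ‖(infDist x A : ℂ) ^ (s - (N:ℂ))‖ ≤ infDist x A ^ (s - (N:ℂ)).re :=
        norm_cpow_le infDist_nonneg _
    _ = infDist x A ^ (s.re - N) := by rw [hre]

end ZetaAux

open ZetaAux in
/-- the distance zeta function `ζ_A(s) = ∫_{A_δ} d(x,A)^{s-N} dx` is well defined
(absolutely convergent) and holomorphic on the half-plane `{Re s > dim̄_B A}`. -/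
theorem stmt0 (N : ℕ) (hN : 1 ≤ N) (A : Set (EuclideanSpace ℝ (Fin N)))
    (hA : A.Nonempty) (hb : Bornology.IsBounded A) (δ : ℝ) (hδ : 0 < δ) :
    (∀ s : ℂ, upperBoxDim N A < s.re →
      IntegrableOn (fun x => (Metric.infDist x A : ℂ) ^ (s - (N : ℂ)))
        (thickening δ A) volume) ∧
    DifferentiableOn ℂ
      (fun s : ℂ => ∫ x in thickening δ A, (Metric.infDist x A : ℂ) ^ (s - (N : ℂ)))
      {s : ℂ | upperBoxDim N A < s.re} := by
  constructor
  · exact fun s hs => integrableOn_cpow hA hb hδ hs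
  · intro s₀ hs₀
    rw [mem_setOf_eq] at hs₀
    set D := upperBoxDim N A with hD
    set d : EuclideanSpace ℝ (Fin N) → ℝ := fun x => infDist x A with hd
    have hdm : Measurable d := (continuous_infDist_pt A).measurable
    set μ : Measure (EuclideanSpace ℝ (Fin N)) := volume.restrict (thickening δ A) with hμ
    set ε : ℝ := (s₀.re - D) / 4 with hε
    have hε0 : 0 < ε := by rw [hε]; linarith
    set e1 : ℝ := s₀.re - 2*ε - N with he1
    set e2 : ℝ := s₀.re - N with he2
    set e3 : ℝ := s₀.re + 2*ε - N with he3
    have he1D : D - N < e1 := by rw [he1, hε]; linarith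
    have he2D : D - N < e2 := by rw [he2]; linarith
    have he3D : D - N < e3 := by rw [he3]; linarith
    set bound : EuclideanSpace ℝ (Fin N) → ℝ :=
      fun x => ((d x ^ e1 + d x ^ e2) + (d x ^ e2 + d x ^ e3)) / ε with hbd
    have hbound_nonneg : ∀ x, 0 ≤ bound x := by
      intro x
      have n1 := Real.rpow_nonneg (infDist_nonneg : 0 ≤ d x) e1
      have n2 := Real.rpow_nonneg (infDist_nonneg : 0 ≤ d x) e2
      have n3 := Real.rpow_nonneg (infDist_nonneg : 0 ≤ d x) e3
      rw [hbd]
      positivity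
    set F : ℂ → EuclideanSpace ℝ (Fin N) → ℂ :=
      fun s x => (d x : ℂ) ^ (s - (N:ℂ)) with hF
    set F' : ℂ → EuclideanSpace ℝ (Fin N) → ℂ :=
      fun s x => (d x : ℂ) ^ (s - (N:ℂ)) * Complex.log (d x) with hF'
    have hre : ∀ s : ℂ, (s - (N:ℂ)).re = s.re - N := fun s => by simp
    -- bound on ‖F' s x‖ for s in the ball
    have h_bound : ∀ᵐ x ∂μ, ∀ s ∈ ball s₀ ε, ‖F' s x‖ ≤ bound x := by
      refine Eventually.of_forall fun x s hs => ?_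
      have hsre : |s.re - s₀.re| ≤ ε := by
        have := Complex.abs_re_le_norm (s - s₀)
        rw [Complex.sub_re] at this
        rw [mem_ball, Complex.dist_eq] at hs
        linarith
      have hsb := abs_le.mp hsre
      rcases (infDist_nonneg : 0 ≤ d x).eq_or_lt with h0 | h0
      · have hdx : d x = 0 := h0.symm
        simp only [hF']
        rw [hdx, Complex.ofReal_zero, Complex.log_zero, mul_zero, norm_zero]
        exact hbound_nonneg x
      · rw [hF', norm_mul,
          Complex.norm_cpow_eq_rpow_re_of_pos h0, hre s,
          ← Complex.ofReal_log h0.le, Complex.norm_real, Real.norm_eq_abs]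
        have hlog : |Real.log (d x)| ≤ (d x ^ (-ε) + d x ^ ε) / ε :=
          abs_log_le h0.le hε0
        calc d x ^ (s.re - N) * |Real.log (d x)|
            ≤ d x ^ (s.re - N) * ((d x ^ (-ε) + d x ^ ε) / ε) :=
              mul_le_mul_of_nonneg_left hlog (Real.rpow_nonneg h0.le _)
          _ = (d x ^ (s.re - N + -ε) + d x ^ (s.re - N + ε)) / ε := by
              rw [← mul_div_assoc, mul_add, ← Real.rpow_add h0, ← Real.rpow_add h0]
          _ ≤ ((d x ^ e1 + d x ^ e2) + (d x ^ e2 + d x ^ e3)) / ε := by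
              rw [div_le_div_iff_of_pos_right hε0]
              refine add_le_add ?_ ?_
              · exact rpow_le_add h0 (by rw [he1]; linarith [hsb.1])
                  (by rw [he2]; linarith [hsb.2])
              · exact rpow_le_add h0 (by rw [he2]; linarith [hsb.1])
                  (by rw [he3]; linarith [hsb.2])
          _ = bound x := by rw [hbd]
    have hbound_int : Integrable bound μ := by
      have i1 : IntegrableOn (fun x => d x ^ e1) (thickening δ A) volume :=
        integrableOn_rpow hA hb hδ he1D
      have i2 : IntegrableOn (fun x => d x ^ e2) (thickening δ A) volume :=
        integrableOn_rpow hA hb hδ he2D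
      have i3 : IntegrableOn (fun x => d x ^ e3) (thickening δ A) volume :=
        integrableOn_rpow hA hb hδ he3D
      exact (((i1.add i2).add (i2.add i3)).div_const ε)
    have hF_meas : ∀ᶠ s in 𝓝 s₀, AEStronglyMeasurable (F s) μ := by
      refine Eventually.of_forall fun s => ?_
      exact (measurable_cpow_const hdm (s - (N:ℂ))).aestronglyMeasurable
    have hF_int : Integrable (F s₀) μ := integrableOn_cpow hA hb hδ hs₀
    have hF'_meas : AEStronglyMeasurable (F' s₀) μ := by
      refine Measurable.aestronglyMeasurable ?_
      exact (measurable_cpow_const hdm (s₀ - (N:ℂ))).mul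
        (Complex.measurable_log.comp (Complex.measurable_ofReal.comp hdm))
    -- differentiability of s ↦ F s x
    have hderiv_pos : ∀ x, 0 < d x → ∀ s ∈ ball s₀ ε,
        HasDerivAt (fun s => F s x) (F' s x) s := by
      intro x hx s _
      have h1 : HasDerivAt (fun s : ℂ => s - (N:ℂ)) 1 s := (hasDerivAt_id s).sub_const _
      have h2 := h1.const_cpow (c := (d x : ℂ)) (Or.inl (Complex.ofReal_ne_zero.mpr hx.ne'))
      simpa [hF, hF', mul_one] using h2
    have h_diff : ∀ᵐ x ∂μ, ∀ s ∈ ball s₀ ε, HasDerivAt (fun s => F s x) (F' s x) s := by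
      rcases lt_or_ge D (N : ℝ) with hDN | hDN
      · -- closure A is a null set, so a.e. d x > 0
        have hnull : volume (d ⁻¹' {0}) = 0 := by
          obtain ⟨r, ⟨hr0, hrM⟩, hrN⟩ := exists_good hb hDN
          obtain ⟨t₀, ht₀, hbound'⟩ := content_bound hrM
          have hsub : ∀ t, 0 < t → d ⁻¹' {0} ⊆ thickening t A := by
            intro t ht x hx
            refine (mem_thickening_iff_infDist_lt hA).mpr ?_
            have hx0 : infDist x A = 0 := hx
            rw [hx0]; exact ht
          have hle : ∀ᶠ t in 𝓝[>] (0:ℝ),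
              volume (d ⁻¹' {0}) ≤ ENNReal.ofReal (t ^ ((N:ℝ) - r)) := by
            filter_upwards [Ioo_mem_nhdsGT_of_mem
              (show (0:ℝ) ∈ Ico (0:ℝ) t₀ from ⟨le_rfl, ht₀⟩)] with t ht
            exact le_trans (measure_mono (hsub t ht.1)) (hbound' t ht.1 ht.2)
          have htend : Tendsto (fun t : ℝ => ENNReal.ofReal (t ^ ((N:ℝ) - r)))
              (𝓝[>] (0:ℝ)) (𝓝 0) := by
            have h0 := (ENNReal.continuous_ofReal.tendsto 0).comp
              (auxTendstoZero (show (0:ℝ) < (N:ℝ) - r by linarith))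
            simpa [Function.comp_def] using h0
          exact le_antisymm (ge_of_tendsto htend hle) zero_le
        have hae : ∀ᵐ x ∂μ, d x ≠ 0 := by
          refine ae_restrict_of_ae ?_
          rw [ae_iff]
          simp only [not_not]
          exact hnull
        filter_upwards [hae] with x hx s hs
        exact hderiv_pos x (lt_of_le_of_ne infDist_nonneg (Ne.symm hx)) s hs
      · -- D = N ; every s in the ball has Re s > N
        have hballre : ∀ s ∈ ball s₀ ε, (N:ℝ) < s.re := by
          intro s hs
          have hsre : |s.re - s₀.re| ≤ ε := by
            have := Complex.abs_re_le_norm (s - s₀)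
            rw [Complex.sub_re] at this
            rw [mem_ball, Complex.dist_eq] at hs
            linarith
          have := abs_le.mp hsre
          have hε' : ε < s₀.re - (N:ℝ) := by
            rw [hε]
            have : (N:ℝ) ≤ D := hDN
            linarith
          linarith
        refine Eventually.of_forall fun x s hs => ?_
        rcases (infDist_nonneg : 0 ≤ d x).eq_or_lt with h0 | h0
        · -- d x = 0 : F s x = 0 near s
          have hdx : d x = 0 := h0.symm
          have hzero : ∀ w : ℂ, (N:ℝ) < w.re → F w x = 0 := by
            intro w hw
            simp only [hF]
            rw [hdx, Complex.ofReal_zero]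
            refine Complex.zero_cpow ?_
            intro hcon
            have : (w - (N:ℂ)).re = 0 := by rw [hcon]; simp
            rw [hre w] at this
            linarith
          have hopen : IsOpen {w : ℂ | (N:ℝ) < w.re} :=
            isOpen_lt continuous_const Complex.continuous_re
          have hmem : s ∈ {w : ℂ | (N:ℝ) < w.re} := hballre s hs
          have heq : (fun w => F w x) =ᶠ[𝓝 s] fun _ => (0:ℂ) := by
            filter_upwards [hopen.mem_nhds hmem] with w hw
            exact hzero w hw
          have hF'0 : F' s x = 0 := by
            simp only [hF']
            rw [hdx, Complex.ofReal_zero, Complex.log_zero, mul_zero]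
          rw [hF'0]
          exact (hasDerivAt_const s (0:ℂ)).congr_of_eventuallyEq heq
        · exact hderiv_pos x h0 s hs
    have key := hasDerivAt_integral_of_dominated_loc_of_deriv_le (ball_mem_nhds s₀ hε0) hF_meas hF_int hF'_meas
      h_bound hbound_int h_diff
    exact key.2.differentiableAt.differentiableWithinAt
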